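/- Let R be a commutative ring and let (a_j)_{j∈ℤ} and (b_j)_{j∈ℤ} be finitely supported families of sequences a_j, b_j : ℤ → R. Define the difference operators A = Σ_j a_j T^j and B = Σ_j b_j T^j acting on sequences s : ℤ → R by (a T^j)(s)_n = a_n · s_{n+j}, so that the coefficient of T^0 in the composition AB is res(AB) := Σ_j a_j · T^j(b_{−j}), where (T^m c)_n := c_{n+m} for a sequence c. Then res(AB) − res(BA) = Σ_j (T^j − 1)(b_{−j} · T^{−j}(a_j)) (a finite sum, products of sequences taken pointwise); in particular, since T^j − 1 factors through T − 1, the residue of the commutator [A,B] lies in the image of T − 1, with σ satisfying res([A,B]) = (T−1)σ given explicitly as a finite sum of shifts of products of the coefficients of A and B. -/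
import Mathlib


/-- the residue of a commutator of difference operators lies in
the image of `T - 1`, with an explicit `σ`.  Here `a j : ℤ → R` is the
coefficient of `T^j` in `A` (finitely many nonzero), and
`res (A∘B) n = ∑ⱼ (a j n) * (b (-j) (n+j))`. -/
theorem res_commutator_in_image_of_shift_sub_one
    (R : Type*) [CommRing R]
    (a b : ℤ → ℤ → R)
    (ha : {j : ℤ | a j ≠ 0}.Finite) (hb : {j : ℤ | b j ≠ 0}.Finite)
    (resAB resBA : ℤ → R)
    (hAB : ∀ n, resAB n = ∑ᶠ j : ℤ, a j n * b (-j) (n + j))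
    (hBA : ∀ n, resBA n = ∑ᶠ j : ℤ, b j n * a (-j) (n + j)) :
    (∀ n, resAB n - resBA n =
        ∑ᶠ j : ℤ, ((b (-j) (n + j) * a j ((n + j) - j))
          - (b (-j) n * a j (n - j)))) ∧
      ∃ σ : ℤ → R, ∀ n, resAB n - resBA n = σ (n + 1) - σ n := by
  -- F j n is the coefficient b (-j) n * a j (n - j)
  set F : ℤ → ℤ → R := fun j n => b (-j) n * a j (n - j) with hF
  have hFzero : ∀ j, a j = 0 → F j = 0 := by
    intro j hj
    funext n
    simp [hF, hj]
  -- supports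
  have hsupp1 : ∀ n : ℤ, (Function.support fun j => F j (n + j)) ⊆ {j : ℤ | a j ≠ 0} := by
    intro n j hj
    simp only [Function.mem_support] at hj
    intro hja
    exact hj (by rw [hFzero j hja]; rfl)
  have hsupp2 : ∀ n : ℤ, (Function.support fun j => F j n) ⊆ {j : ℤ | a j ≠ 0} := by
    intro n j hj
    simp only [Function.mem_support] at hj
    intro hja
    exact hj (by rw [hFzero j hja]; rfl)
  have hfin1 : ∀ n : ℤ, (Function.support fun j => F j (n + j)).Finite :=
    fun n => ha.subset (hsupp1 n)
  have hfin2 : ∀ n : ℤ, (Function.support fun j => F j n).Finite :=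
    fun n => ha.subset (hsupp2 n)
  -- resAB n = ∑ᶠ j, F j (n + j)
  have hAB' : ∀ n, resAB n = ∑ᶠ j : ℤ, F j (n + j) := by
    intro n
    rw [hAB n]
    apply finsum_congr
    intro j
    simp [hF, mul_comm]
  -- resBA n = ∑ᶠ j, F j n  (reindex j ↦ -j)
  have hBA' : ∀ n, resBA n = ∑ᶠ j : ℤ, F j n := by
    intro n
    rw [hBA n]
    rw [← finsum_comp_equiv (Equiv.neg ℤ) (f := fun j => F j n)]
    apply finsum_congr
    intro j
    simp [hF, Equiv.neg]
  have key : ∀ n, resAB n - resBA n = ∑ᶠ j : ℤ, (F j (n + j) - F j n) := by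
    intro n
    rw [hAB' n, hBA' n, finsum_sub_distrib (hfin1 n) (hfin2 n)]
  constructor
  · intro n
    exact key n
  · -- construct σ
    set G : ℤ → ℤ → R := fun j n =>
      if 0 ≤ j then ∑ k ∈ Finset.range j.toNat, F j (n + k)
      else -∑ k ∈ Finset.range (-j).toNat, F j (n - (k + 1)) with hG
    have hGzero : ∀ j, a j = 0 → ∀ n, G j n = 0 := by
      intro j hj n
      have : F j = 0 := hFzero j hj
      simp [hG, this]
    have hGstep : ∀ j n, G j (n + 1) - G j n = F j (n + j) - F j n := by
      intro j n
      by_cases hj : 0 ≤ j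
      · simp only [hG, if_pos hj]
        rw [← Finset.sum_sub_distrib]
        have : ∀ k ∈ Finset.range j.toNat,
            F j (n + 1 + (k : ℤ)) - F j (n + (k : ℤ))
              = F j (n + ((k : ℕ) + 1 : ℕ)) - F j (n + (k : ℕ)) := by
          intro k _
          push_cast
          ring_nf
        rw [Finset.sum_congr rfl this, Finset.sum_range_sub (fun k => F j (n + (k : ℕ)))]
        have hjt : ((j.toNat : ℤ)) = j := Int.toNat_of_nonneg hj
        rw [hjt]
        simp
      · push_neg at hj
        simp only [hG, if_neg (not_le.mpr hj)]
        rw [neg_sub_neg, ← Finset.sum_sub_distrib]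
        have : ∀ k ∈ Finset.range (-j).toNat,
            F j (n - ((k : ℤ) + 1)) - F j (n + 1 - ((k : ℤ) + 1))
              = F j (n - ((k : ℕ) + 1 : ℕ)) - F j (n - (k : ℕ)) := by
          intro k _
          push_cast
          ring_nf
        rw [Finset.sum_congr rfl this,
          Finset.sum_range_sub (fun k => F j (n - (k : ℕ)))]
        have hjt : (((-j).toNat : ℤ)) = -j := Int.toNat_of_nonneg (by omega)
        rw [hjt, show n - -j = n + j from by ring,
          show n - ((0 : ℕ) : ℤ) = n from by simp]
    refine ⟨fun n => ∑ᶠ j : ℤ, G j n, ?_⟩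
    intro n
    have hGsupp : ∀ m : ℤ, (Function.support fun j => G j m).Finite := by
      intro m
      apply ha.subset
      intro j hj
      simp only [Function.mem_support] at hj
      intro hja
      exact hj (hGzero j hja m)
    rw [key n, ← finsum_sub_distrib (hGsupp (n + 1)) (hGsupp n)]
    apply finsum_congr
    intro j
    exact (hGstep j n).symm
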